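/- Let κ, θ, σ > 0 with α := (4κθ − σ²)/8 ≥ 0, let N ∈ ℕ, and let h : ℕ → ℝ be strictly positive. On a probability space (Ω, F, ℙ) let (ξ_n)_{n∈ℕ} be an independent family of real random variables with ξ_n distributed as the Gaussian measure with mean 0 and variance h(n+1). Define X_0 = x₀ ≥ 0 and X_{n+1} = e^{−κ h(n+1)} (√(X_n + 2α h(n+1)) + (σ/2) ξ_n)². Then for every n, X_n is nonnegative and integrable and the means satisfy the exact recursion E[X_{n+1}] = e^{−κ h(n+1)} ( E[X_n] + κθ h(n+1) ). -/

import Mathlib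

open MeasureTheory ProbabilityTheory

section CIRAux
open MeasureTheory ProbabilityTheory Real Set
open scoped NNReal ENNReal

variable {v : ℝ≥0}

lemma CIR_pdf_eq (hv : v ≠ 0) (x : ℝ) :
    gaussianPDFReal 0 v x = (Real.sqrt (2 * Real.pi * v))⁻¹ * Real.exp (-(((2:ℝ)*v)⁻¹) * x ^ 2) := by
  rw [gaussianPDFReal]
  congr 1
  rw [sub_zero]
  congr 1
  rw [neg_div, neg_mul]
  congr 1
  rw [div_eq_inv_mul]

lemma CIR_integral_gauss_eq (hv : v ≠ 0) (g : ℝ → ℝ) :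
    ∫ x, g x ∂(gaussianReal 0 v) = ∫ x, gaussianPDFReal 0 v x * g x := by
  rw [gaussianReal_of_var_ne_zero _ hv]
  have : (gaussianPDF 0 v) = fun x => ((gaussianPDFReal 0 v x).toNNReal : ℝ≥0∞) := by
    ext x; rfl
  rw [this, integral_withDensity_eq_integral_smul
    ((measurable_gaussianPDFReal 0 v).real_toNNReal) g]
  congr 1
  ext x
  rw [NNReal.smul_def, Real.coe_toNNReal _ (gaussianPDFReal_nonneg 0 v x)]
  rfl

lemma CIR_integrable_gauss_iff (hv : v ≠ 0) (g : ℝ → ℝ) (hg : Measurable g) :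
    Integrable g (gaussianReal 0 v) ↔
      Integrable (fun x => g x * gaussianPDFReal 0 v x) volume := by
  rw [gaussianReal_of_var_ne_zero _ hv]
  rw [integrable_withDensity_iff (measurable_gaussianPDF 0 v)
    (ae_of_all _ fun x => ENNReal.ofReal_lt_top)]
  simp_rw [gaussianPDF, ENNReal.toReal_ofReal (gaussianPDFReal_nonneg 0 v _)]

lemma CIR_hvposp (hv : v ≠ 0) : (0:ℝ) < (v:ℝ) :=
  NNReal.coe_pos.mpr (pos_iff_ne_zero.mpr hv)

lemma CIR_hbpos (hv : v ≠ 0) : (0:ℝ) < ((2:ℝ)*v)⁻¹ := by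
  have := CIR_hvposp hv
  positivity

lemma CIR_integrable_id_gauss (hv : v ≠ 0) : Integrable (fun x : ℝ => x) (gaussianReal 0 v) := by
  rw [CIR_integrable_gauss_iff hv (fun x => x) measurable_id]
  have hb := CIR_hbpos hv
  simp_rw [CIR_pdf_eq hv]
  have := (integrable_mul_exp_neg_mul_sq hb).const_mul (Real.sqrt (2 * Real.pi * v))⁻¹
  refine this.congr ?_
  refine ae_of_all _ fun x => by ring

lemma CIR_integrable_sq_gauss (hv : v ≠ 0) : Integrable (fun x : ℝ => x ^ 2) (gaussianReal 0 v) := by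
  rw [CIR_integrable_gauss_iff hv (fun x => x ^ 2) (measurable_id.pow_const 2)]
  have hb := CIR_hbpos hv
  simp_rw [CIR_pdf_eq hv]
  have h2 : (-1:ℝ) < 2 := by norm_num
  have := (integrable_rpow_mul_exp_neg_mul_sq hb h2).const_mul (Real.sqrt (2 * Real.pi * v))⁻¹
  refine this.congr ?_
  refine ae_of_all _ fun x => ?_
  beta_reduce
  rw [show x ^ (2:ℝ) = x ^ (2:ℕ) from by rw [← Real.rpow_natCast x 2]; norm_num]
  ring

lemma CIR_integral_id_gauss (hv : v ≠ 0) : ∫ x, x ∂(gaussianReal 0 v) = 0 := by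
  rw [CIR_integral_gauss_eq hv]
  set f : ℝ → ℝ := fun x => gaussianPDFReal 0 v x * x with hf
  have hodd : ∀ x, f (-x) = - f x := by
    intro x
    simp only [f, CIR_pdf_eq hv]
    rw [neg_sq]
    ring
  have hemb : MeasurableEmbedding (fun x : ℝ => -x) :=
    (Homeomorph.neg ℝ).measurableEmbedding
  have h1 : ∫ x, f x = ∫ x, f (-x) := by
    conv_lhs => rw [← Measure.map_neg_eq_self (volume : Measure ℝ)]
    exact hemb.integral_map f
  have h2 : ∫ x, f (-x) = - ∫ x, f x := by
    simp_rw [hodd]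
    exact integral_neg f
  linarith [h1, h2]

lemma CIR_integral_sq_gauss (hv : v ≠ 0) : ∫ x, x ^ 2 ∂(gaussianReal 0 v) = v := by
  rw [CIR_integral_gauss_eq hv]
  have hb := CIR_hbpos hv
  have hvpos : (0:ℝ) < (v:ℝ) := CIR_hvposp hv
  set s : ℝ := Real.sqrt (2 * v) with hs
  have hspos : 0 < s := Real.sqrt_pos.mpr (by positivity)
  have hs2 : s ^ 2 = 2 * v := Real.sq_sqrt (by positivity)
  have hsp : (0:ℝ) < Real.sqrt Real.pi := Real.sqrt_pos.mpr Real.pi_pos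
  have hc : Real.sqrt (2 * Real.pi * v) = Real.sqrt Real.pi * s := by
    rw [hs, ← Real.sqrt_mul Real.pi_pos.le]
    congr 1; ring
  simp_rw [CIR_pdf_eq hv]
  have key : ∫ x : ℝ, (Real.sqrt (2 * Real.pi * v))⁻¹ * Real.exp (-(((2:ℝ)*v)⁻¹) * x ^ 2) * x ^ 2
      = (Real.sqrt (2 * Real.pi * v))⁻¹ * ∫ x : ℝ, x ^ 2 * Real.exp (-(((2:ℝ)*v)⁻¹) * x ^ 2) := by
    rw [← integral_const_mul]
    congr 1; ext x; ring
  rw [key]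
  have habs : ∫ x : ℝ, x ^ 2 * Real.exp (-(((2:ℝ)*v)⁻¹) * x ^ 2)
      = 2 * ∫ x in Ioi (0:ℝ), x ^ 2 * Real.exp (-(((2:ℝ)*v)⁻¹) * x ^ 2) := by
    rw [← integral_comp_abs (f := fun x => x ^ 2 * Real.exp (-(((2:ℝ)*v)⁻¹) * x ^ 2))]
    congr 1; ext x; rw [sq_abs]
  rw [habs]
  have hioi : ∫ x in Ioi (0:ℝ), x ^ 2 * Real.exp (-(((2:ℝ)*v)⁻¹) * x ^ 2)
      = (((2:ℝ)*v)⁻¹) ^ (-(3:ℝ)/2) * (1/2) * Real.Gamma ((3:ℝ)/2) := by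
    have h32 : (-(3:ℝ)/2) = -((2:ℝ)+1)/2 := by norm_num
    have h32' : ((3:ℝ)/2) = ((2:ℝ)+1)/2 := by norm_num
    rw [h32, h32']
    rw [← integral_rpow_mul_exp_neg_mul_rpow (p := 2) (q := 2) (b := ((2:ℝ)*v)⁻¹)
      (by norm_num) (by norm_num) hb]
    refine setIntegral_congr_fun measurableSet_Ioi fun x hx => ?_
    have hx0 : (0:ℝ) < x := hx
    rw [show x ^ (2:ℝ) = x ^ (2:ℕ) from by rw [← Real.rpow_natCast x 2]; norm_num]
  rw [hioi]
  have hGamma : Real.Gamma ((3:ℝ)/2) = Real.sqrt Real.pi / 2 := by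
    have : (3:ℝ)/2 = 1/2 + 1 := by norm_num
    rw [this, Real.Gamma_add_one (by norm_num), Real.Gamma_one_half_eq]
    ring
  have h2v : (0:ℝ) ≤ 2 * v := by positivity
  have hrpow : (((2:ℝ)*v)⁻¹) ^ (-(3:ℝ)/2) = s ^ 3 := by
    rw [Real.inv_rpow h2v, ← Real.rpow_neg h2v]
    rw [hs, Real.sqrt_eq_rpow, ← Real.rpow_natCast ((2 * (v:ℝ)) ^ ((1:ℝ)/2)) 3,
      ← Real.rpow_mul h2v]
    norm_num
  rw [hrpow, hGamma, hc]
  field_simp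
  linear_combination hs2

end CIRAux

/-- Exact mean recursion for the CIR splitting scheme on a deterministic mesh:
with `α = (4κθ − σ²)/8 ≥ 0`, `ξ_n ~ N(0, h(n+1))` independent, and
`X_{n+1} = e^{−κh(n+1)}(√(X_n + 2αh(n+1)) + (σ/2)ξ_n)²`, every `X_n` is
nonnegative and integrable and `E[X_{n+1}] = e^{−κh(n+1)}(E[X_n] + κθh(n+1))`. -/
theorem splitting_scheme_mean_recursion
    {Ω : Type*} [MeasurableSpace Ω] (μ : Measure Ω) [IsProbabilityMeasure μ]
    (κ θ σ α : ℝ) (hκ : 0 < κ) (hθ : 0 < θ) (hσ : 0 < σ)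
    (hα : α = (4 * κ * θ - σ ^ 2) / 8) (hα0 : 0 ≤ α)
    (N : ℕ) (h : ℕ → ℝ) (hh : ∀ n, 0 < h n)
    (ξ : ℕ → Ω → ℝ) (hξ_meas : ∀ n, Measurable (ξ n))
    (hξ_indep : iIndepFun (m := fun _ => Real.measurableSpace) ξ μ)
    (hξ_law : ∀ n, Measure.map (ξ n) μ = gaussianReal 0 (h (n + 1)).toNNReal)
    (x₀ : ℝ) (hx₀ : 0 ≤ x₀)
    (X : ℕ → Ω → ℝ) (hX0 : ∀ ω, X 0 ω = x₀)
    (hXrec : ∀ n ω, X (n + 1) ω =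
      Real.exp (-κ * h (n + 1)) *
        (Real.sqrt (X n ω + 2 * α * h (n + 1)) + σ / 2 * ξ n ω) ^ 2) :
    ∀ n, (∀ ω, 0 ≤ X n ω) ∧ Integrable (X n) μ ∧
      ∫ ω, X (n + 1) ω ∂μ =
        Real.exp (-κ * h (n + 1)) * ((∫ ω, X n ω ∂μ) + κ * θ * h (n + 1)) := by
  -- variance is nonzero
  have hvne : ∀ n : ℕ, (h (n + 1)).toNNReal ≠ 0 := fun n =>
    fun hc => absurd (Real.toNNReal_pos.mpr (hh (n + 1))) (by simp [hc])
  have hvcoe : ∀ n : ℕ, (((h (n + 1)).toNNReal : ℝ)) = h (n + 1) := fun n =>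
    Real.coe_toNNReal _ (hh (n + 1)).le
  -- moments of ξ
  have hξ_int : ∀ n, Integrable (ξ n) μ := by
    intro n
    have hg := CIR_integrable_id_gauss (hvne n)
    rw [← hξ_law n] at hg
    exact (integrable_map_measure aestronglyMeasurable_id (hξ_meas n).aemeasurable).mp hg
  have hξ_mean : ∀ n, ∫ ω, ξ n ω ∂μ = 0 := by
    intro n
    have hg := CIR_integral_id_gauss (hvne n)
    rw [← hξ_law n, integral_map (f := fun x : ℝ => x) (hξ_meas n).aemeasurable
      measurable_id.aestronglyMeasurable] at hg
    exact hg
  have hξ_sq_int : ∀ n, Integrable (fun ω => ξ n ω ^ 2) μ := by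
    intro n
    have hg := CIR_integrable_sq_gauss (hvne n)
    rw [← hξ_law n] at hg
    exact (integrable_map_measure (measurable_id.pow_const 2).aestronglyMeasurable
      (hξ_meas n).aemeasurable).mp hg
  have hξ_sq : ∀ n, ∫ ω, ξ n ω ^ 2 ∂μ = h (n + 1) := by
    intro n
    have hg := CIR_integral_sq_gauss (hvne n)
    rw [← hξ_law n, integral_map (f := fun x : ℝ => x ^ 2) (hξ_meas n).aemeasurable
      ((measurable_id.pow_const 2).aestronglyMeasurable)] at hg
    rw [hg, hvcoe n]
  -- representation of X n as a measurable function of ξ_0, ..., ξ_{n-1}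
  have hrep : ∀ n, ∃ F : (Fin n → ℝ) → ℝ, Measurable F ∧ ∀ ω, X n ω = F (fun i => ξ i ω) := by
    intro n
    induction n with
    | zero => exact ⟨fun _ => x₀, measurable_const, fun ω => hX0 ω⟩
    | succ n ih =>
      obtain ⟨F, hFm, hFX⟩ := ih
      refine ⟨fun w => Real.exp (-κ * h (n + 1)) *
        (Real.sqrt (F (fun i => w i.castSucc) + 2 * α * h (n + 1))
          + σ / 2 * w (Fin.last n)) ^ 2, ?_, ?_⟩
      · have m1 : Measurable fun w : Fin (n + 1) → ℝ => F (fun i => w i.castSucc) :=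
          hFm.comp (measurable_pi_lambda _ fun i => measurable_pi_apply _)
        exact (((Real.continuous_sqrt.measurable.comp (m1.add_const _)).add
          ((measurable_pi_apply (Fin.last n)).const_mul _)).pow_const 2).const_mul _
      · intro ω
        rw [hXrec n ω, hFX ω]
        simp [Fin.coe_castSucc, Fin.val_last]
  have hXmeas : ∀ n, Measurable (X n) := by
    intro n
    obtain ⟨F, hFm, hFX⟩ := hrep n
    have : X n = fun ω => F (fun i => ξ i ω) := funext hFX
    rw [this]
    exact hFm.comp (measurable_pi_lambda _ fun i => hξ_meas i)
  -- independence of X n and ξ n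
  have hindep : ∀ n, IndepFun (X n) (ξ n) μ := by
    intro n
    obtain ⟨F, hFm, hFX⟩ := hrep n
    have hd : Disjoint (Finset.range n) ({n} : Finset ℕ) := by
      simp [Finset.disjoint_singleton_right]
    have hI := hξ_indep.indepFun_finset (Finset.range n) {n} hd hξ_meas
    set φ : ((i : (Finset.range n : Finset ℕ)) → ℝ) → ℝ :=
      fun w => F (fun i : Fin n => w ⟨(i : ℕ), Finset.mem_range.mpr i.isLt⟩) with hφ
    set ψ : ((i : ({n} : Finset ℕ)) → ℝ) → ℝ :=
      fun w => w ⟨n, Finset.mem_singleton_self n⟩ with hψ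
    have hφm : Measurable φ := hFm.comp (measurable_pi_lambda _ fun i => measurable_pi_apply _)
    have hψm : Measurable ψ := measurable_pi_apply _
    have hc := hI.comp hφm hψm
    have e1 : (φ ∘ fun a (i : (Finset.range n : Finset ℕ)) => ξ (i : ℕ) a) = X n := by
      funext ω
      exact (hFX ω).symm
    have e2 : (ψ ∘ fun a (i : ({n} : Finset ℕ)) => ξ (i : ℕ) a) = ξ n := by
      funext ω
      rfl
    rwa [e1, e2] at hc
  -- the key step
  have step : ∀ n, (∀ ω, 0 ≤ X n ω) → Integrable (X n) μ →
      ((∀ ω, 0 ≤ X (n + 1) ω) ∧ Integrable (X (n + 1)) μ ∧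
        ∫ ω, X (n + 1) ω ∂μ =
          Real.exp (-κ * h (n + 1)) * ((∫ ω, X n ω ∂μ) + κ * θ * h (n + 1))) := by
    intro n hnn hint
    set t := h (n + 1) with ht
    have ht0 : 0 < t := hh (n + 1)
    set c := Real.exp (-κ * t) with hc
    have hc0 : 0 < c := Real.exp_pos _
    set d : ℝ := 2 * α * t with hd
    have hd0 : 0 ≤ d := by positivity
    set a : Ω → ℝ := fun ω => Real.sqrt (X n ω + d) with ha
    have ham : Measurable a := Real.continuous_sqrt.measurable.comp ((hXmeas n).add_const d)
    have hann : ∀ ω, 0 ≤ a ω := fun ω => Real.sqrt_nonneg _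
    have hsq : ∀ ω, a ω ^ 2 = X n ω + d := fun ω =>
      Real.sq_sqrt (add_nonneg (hnn ω) hd0)
    have hnn1 : ∀ ω, 0 ≤ X (n + 1) ω := by
      intro ω
      rw [hXrec n ω]
      positivity
    have hexp : ∀ ω, X (n + 1) ω =
        c * (X n ω + d) + (2 * c * (σ / 2)) * (a ω * ξ n ω) + (c * (σ / 2) ^ 2) * ξ n ω ^ 2 := by
      intro ω
      rw [hXrec n ω]
      have h1 : Real.sqrt (X n ω + d) ^ 2 = X n ω + d :=
        Real.sq_sqrt (add_nonneg (hnn ω) hd0)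
      simp only [ha, ← ht, ← hd, ← hc]
      linear_combination c * h1
    have hXfun : X (n + 1) = fun ω =>
        c * (X n ω + d) + (2 * c * (σ / 2)) * (a ω * ξ n ω) + (c * (σ / 2) ^ 2) * ξ n ω ^ 2 :=
      funext hexp
    -- integrability pieces
    have int1 : Integrable (fun ω => X n ω + d) μ := hint.add (integrable_const d)
    have inta : Integrable a μ := by
      refine (int1.add (integrable_const 1)).mono ham.aestronglyMeasurable (ae_of_all _ fun ω => ?_)
      simp only [Pi.add_apply, Real.norm_eq_abs]
      rw [abs_of_nonneg (hann ω),
        abs_of_nonneg (by nlinarith [hnn ω, hd0] : (0:ℝ) ≤ X n ω + d + 1)]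
      nlinarith [hsq ω, sq_nonneg (a ω - 1)]
    have hindepa : IndepFun a (ξ n) μ := by
      have := (hindep n).comp (φ := fun x : ℝ => Real.sqrt (x + d)) (ψ := id)
        (Real.continuous_sqrt.measurable.comp (measurable_id.add_const d)) measurable_id
      exact this
    have intaξ : Integrable (fun ω => a ω * ξ n ω) μ := by
      have := hindepa.integrable_mul inta (hξ_int n)
      exact this
    have intA : Integrable (fun ω => c * (X n ω + d)) μ := int1.const_mul c
    have intB : Integrable (fun ω => (2 * c * (σ / 2)) * (a ω * ξ n ω)) μ := intaξ.const_mul _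
    have intC : Integrable (fun ω => (c * (σ / 2) ^ 2) * ξ n ω ^ 2) μ :=
      (hξ_sq_int n).const_mul _
    have intAB : Integrable
        (fun ω => c * (X n ω + d) + (2 * c * (σ / 2)) * (a ω * ξ n ω)) μ := by
      exact intA.add intB
    have hint1 : Integrable (X (n + 1)) μ := by
      rw [hXfun]
      exact intAB.add intC
    refine ⟨hnn1, hint1, ?_⟩
    have hiaξ : ∫ ω, a ω * ξ n ω ∂μ = 0 := by
      have hmul := hindepa.integral_mul_eq_mul_integral ham.aestronglyMeasurable
        (hξ_meas n).aestronglyMeasurable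
      have e : (fun ω => a ω * ξ n ω) = a * ξ n := rfl
      rw [e, hmul, hξ_mean n, mul_zero]
    calc ∫ ω, X (n + 1) ω ∂μ
        = ∫ ω, (c * (X n ω + d) + (2 * c * (σ / 2)) * (a ω * ξ n ω)
            + (c * (σ / 2) ^ 2) * ξ n ω ^ 2) ∂μ := by rw [hXfun]
      _ = (∫ ω, c * (X n ω + d) ∂μ) + (∫ ω, (2 * c * (σ / 2)) * (a ω * ξ n ω) ∂μ)
            + ∫ ω, (c * (σ / 2) ^ 2) * ξ n ω ^ 2 ∂μ := by
          rw [integral_add intAB intC, integral_add intA intB]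
      _ = c * ((∫ ω, X n ω ∂μ) + d) + (2 * c * (σ / 2)) * 0 + (c * (σ / 2) ^ 2) * t := by
          rw [integral_const_mul, integral_const_mul, integral_const_mul, hiaξ, hξ_sq n,
            integral_add hint (integrable_const d), integral_const]
          simp [← ht]
      _ = c * ((∫ ω, X n ω ∂μ) + κ * θ * t) := by
          rw [hd]
          linear_combination (2 * c * t) * hα
  intro n
  have main : ∀ m, (∀ ω, 0 ≤ X m ω) ∧ Integrable (X m) μ := by
    intro m
    induction m with
    | zero =>
      refine ⟨fun ω => by rw [hX0 ω]; exact hx₀, ?_⟩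
      have : X 0 = fun _ => x₀ := funext hX0
      rw [this]
      exact integrable_const x₀
    | succ m ih =>
      obtain ⟨h1, h2, _⟩ := step m ih.1 ih.2
      exact ⟨h1, h2⟩
  exact ⟨(main n).1, (main n).2, (step n (main n).1 (main n).2).2.2⟩
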